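/- Let (T₁, v₁) and (T₂, v₂) be trees with distinguished vertices, and let (T₃, v₃) be obtained by taking the disjoint union of T₁ and T₂ and identifying v₁ with v₂ into a single vertex v₃. Then T₃ is a tree, a(T₃,v₃) = a(T₁,v₁)·a(T₂,v₂), and b(T₃,v₃) = b(T₁,v₁)·b(T₂,v₂). -/

import Mathlib

/-- The number of independent sets of `G` containing the vertex `v`. -/
noncomputable def aCount {V : Type*} (G : SimpleGraph V) (v : V) : ℕ :=
  Nat.card {s : Set V // v ∈ s ∧ ∀ x ∈ s, ∀ y ∈ s, ¬ G.Adj x y}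

/-- The number of independent sets of `G` not containing the vertex `v`
(including the empty set). -/
noncomputable def bCount {V : Type*} (G : SimpleGraph V) (v : V) : ℕ :=
  Nat.card {s : Set V // v ∉ s ∧ ∀ x ∈ s, ∀ y ∈ s, ¬ G.Adj x y}

/-- The graph obtained from the disjoint union of `G` and `G'` by identifying
`v ∈ V(G)` with `v' ∈ V(G')`.  Its vertex set is `V ⊕ {x : V' // x ≠ v'}`,
where `Sum.inl v` plays the role of the merged vertex. -/
def glue {V V' : Type*} (G : SimpleGraph V) (v : V) (G' : SimpleGraph V')
    (v' : V') : SimpleGraph (V ⊕ {x : V' // x ≠ v'}) where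
  Adj a b :=
    match a, b with
    | Sum.inl a, Sum.inl b => G.Adj a b
    | Sum.inl a, Sum.inr b => a = v ∧ G'.Adj v' b.1
    | Sum.inr a, Sum.inl b => b = v ∧ G'.Adj v' a.1
    | Sum.inr a, Sum.inr b => G'.Adj a.1 b.1
  symm := by
    constructor
    rintro (a | a) (b | b) h
    · exact G.adj_symm h
    · exact h
    · exact h
    · exact G'.adj_symm h
  loopless := by
    constructor
    rintro (a | a) h
    exacts [G.irrefl h, G'.irrefl h]

namespace GlueAux

variable {V₁ V₂ : Type*} {T₁ : SimpleGraph V₁} {v₁ : V₁} {T₂ : SimpleGraph V₂} {v₂ : V₂}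

/-- The canonical map from `V₂` to the glued vertex set. -/
noncomputable def fmap (v₁ : V₁) (v₂ : V₂) (y : V₂) : V₁ ⊕ {x : V₂ // x ≠ v₂} :=
  open Classical in
  if h : y = v₂ then Sum.inl v₁ else Sum.inr ⟨y, h⟩

lemma fmap_v₂ : fmap v₁ v₂ v₂ = Sum.inl v₁ := by simp [fmap]

lemma fmap_ne {y : V₂} (h : y ≠ v₂) : fmap v₁ v₂ y = Sum.inr ⟨y, h⟩ := by simp [fmap, h]

lemma fmap_inr (b : {x : V₂ // x ≠ v₂}) : fmap v₁ v₂ b.1 = Sum.inr b := by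
  rw [fmap_ne b.2]

lemma fmap_injective : Function.Injective (fmap v₁ v₂) := by
  intro x y h
  by_cases h1 : x = v₂ <;> by_cases h2 : y = v₂
  · rw [h1, h2]
  · rw [h1, fmap_v₂, fmap_ne h2] at h; exact absurd h (by simp)
  · rw [h2, fmap_v₂, fmap_ne h1] at h; exact absurd h (by simp)
  · rw [fmap_ne h1, fmap_ne h2] at h; simpa using h

/-- `Sum.inl` as a graph homomorphism. -/
def ι (T₁ : SimpleGraph V₁) (v₁ : V₁) (T₂ : SimpleGraph V₂) (v₂ : V₂) :
    T₁ →g glue T₁ v₁ T₂ v₂ := ⟨Sum.inl, fun h => h⟩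

/-- `fmap` as a graph homomorphism. -/
noncomputable def φ (T₁ : SimpleGraph V₁) (v₁ : V₁) (T₂ : SimpleGraph V₂) (v₂ : V₂) :
    T₂ →g glue T₁ v₁ T₂ v₂ where
  toFun := fmap v₁ v₂
  map_rel' := by
    intro x y h
    by_cases hx : x = v₂ <;> by_cases hy : y = v₂
    · subst hx; subst hy; exact absurd h T₂.irrefl
    · subst hx; rw [fmap_v₂, fmap_ne hy]; exact ⟨rfl, h⟩
    · subst hy; rw [fmap_v₂, fmap_ne hx]; exact ⟨rfl, T₂.adj_symm h⟩
    · rw [fmap_ne hx, fmap_ne hy]; exact h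

lemma mem_ranges {x : V₁ ⊕ {z : V₂ // z ≠ v₂}}
    (h1 : x ∈ Set.range (Sum.inl : V₁ → V₁ ⊕ {z : V₂ // z ≠ v₂}))
    (h2 : x ∈ Set.range (fmap v₁ v₂)) : x = Sum.inl v₁ := by
  obtain ⟨a, rfl⟩ := h1
  obtain ⟨y, hy⟩ := h2
  by_cases h : y = v₂
  · subst h; rw [fmap_v₂] at hy; exact hy.symm
  · rw [fmap_ne h] at hy; exact absurd hy (by simp)

lemma adj_cases {x y : V₁ ⊕ {z : V₂ // z ≠ v₂}} (h : (glue T₁ v₁ T₂ v₂).Adj x y) :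
    (x ∈ Set.range (Sum.inl : V₁ → _) ∧ y ∈ Set.range (Sum.inl : V₁ → _)) ∨
    (x ∈ Set.range (fmap v₁ v₂) ∧ y ∈ Set.range (fmap v₁ v₂)) := by
  match x, y with
  | Sum.inl a, Sum.inl b => exact Or.inl ⟨⟨a, rfl⟩, ⟨b, rfl⟩⟩
  | Sum.inl a, Sum.inr b =>
      exact Or.inr ⟨⟨v₂, by rw [fmap_v₂, h.1]⟩, ⟨b.1, fmap_inr b⟩⟩
  | Sum.inr a, Sum.inl b =>
      exact Or.inr ⟨⟨a.1, fmap_inr a⟩, ⟨v₂, by rw [fmap_v₂, h.1]⟩⟩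
  | Sum.inr a, Sum.inr b =>
      exact Or.inr ⟨⟨a.1, fmap_inr a⟩, ⟨b.1, fmap_inr b⟩⟩

lemma pass {x y : V₁ ⊕ {z : V₂ // z ≠ v₂}} (p : (glue T₁ v₁ T₂ v₂).Walk x y)
    (hx : x ∈ Set.range (Sum.inl : V₁ → _)) (hy : y ∉ Set.range (Sum.inl : V₁ → _)) :
    Sum.inl v₁ ∈ p.support := by
  induction p with
  | nil => exact absurd hx hy
  | cons h p ih =>
    rcases adj_cases h with ⟨_, hz⟩ | ⟨hx2, _⟩
    · exact List.mem_cons_of_mem _ (ih hz hy)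
    · rw [← mem_ranges hx hx2]
      exact SimpleGraph.Walk.start_mem_support _

lemma lift₁ {x y : V₁ ⊕ {z : V₂ // z ≠ v₂}} (p : (glue T₁ v₁ T₂ v₂).Walk x y)
    (hs : ∀ z ∈ p.support, z ∈ Set.range (Sum.inl : V₁ → _)) :
    ∀ a b, ∀ (ha : x = Sum.inl a) (hb : y = Sum.inl b),
      ∃ q : T₁.Walk a b, q.map (ι T₁ v₁ T₂ v₂) = p.copy ha hb := by
  induction p with
  | nil =>
    intro a b ha hb
    obtain rfl : a = b := Sum.inl_injective (ha.symm.trans hb)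
    subst ha
    exact ⟨SimpleGraph.Walk.nil, rfl⟩
  | @cons u z w h p ih =>
    intro a b ha hb
    obtain ⟨c, hc⟩ := hs z (by simp)
    subst hc
    subst ha
    obtain ⟨q, hq⟩ := ih (fun t ht => hs t (by simp [ht])) c b rfl hb
    have h' : T₁.Adj a c := h
    refine ⟨SimpleGraph.Walk.cons h' q, ?_⟩
    rw [SimpleGraph.Walk.map_cons, hq, SimpleGraph.Walk.copy_cons]
    rfl

lemma lift₂ {x y : V₁ ⊕ {z : V₂ // z ≠ v₂}} (p : (glue T₁ v₁ T₂ v₂).Walk x y)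
    (hs : ∀ z ∈ p.support, z ∈ Set.range (fmap v₁ v₂)) :
    ∀ a b, ∀ (ha : x = fmap v₁ v₂ a) (hb : y = fmap v₁ v₂ b),
      ∃ q : T₂.Walk a b, q.map (φ T₁ v₁ T₂ v₂) = p.copy ha hb := by
  induction p with
  | nil =>
    intro a b ha hb
    obtain rfl : a = b := fmap_injective (ha.symm.trans hb)
    subst ha
    exact ⟨SimpleGraph.Walk.nil, rfl⟩
  | @cons u z w h p ih =>
    intro a b ha hb
    obtain ⟨c, hc⟩ := hs z (by simp)
    subst hc
    subst ha
    obtain ⟨q, hq⟩ := ih (fun t ht => hs t (by simp [ht])) c b rfl hb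
    have hadj : T₂.Adj a c := by
      by_cases h1 : a = v₂ <;> by_cases h2 : c = v₂
      · rw [h1, h2, fmap_v₂] at h; exact absurd h (glue T₁ v₁ T₂ v₂).irrefl
      · rw [h1, fmap_v₂, fmap_ne h2] at h; rw [h1]; exact h.2
      · rw [h2, fmap_v₂, fmap_ne h1] at h; rw [h2]; exact T₂.adj_symm h.2
      · rw [fmap_ne h1, fmap_ne h2] at h; exact h
    refine ⟨SimpleGraph.Walk.cons hadj q, ?_⟩
    rw [SimpleGraph.Walk.map_cons, hq, SimpleGraph.Walk.copy_cons]
    rfl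

/-- Combine a subset of `V₁` and a subset of `V₂` into a subset of the glued vertex set. -/
def mkSet (s₁ : Set V₁) (s₂ : Set V₂) : Set (V₁ ⊕ {x : V₂ // x ≠ v₂}) :=
  {z | Sum.elim (· ∈ s₁) (fun b => b.1 ∈ s₂) z}

lemma mem_mkSet_fmap {s₁ : Set V₁} {s₂ : Set V₂} (hiff : v₁ ∈ s₁ ↔ v₂ ∈ s₂) (y : V₂) :
    fmap v₁ v₂ y ∈ mkSet (v₂ := v₂) s₁ s₂ ↔ y ∈ s₂ := by
  by_cases hy : y = v₂
  · rw [hy, fmap_v₂]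
    exact hiff
  · rw [fmap_ne hy]
    exact Iff.rfl

lemma indep_left {s : Set (V₁ ⊕ {x : V₂ // x ≠ v₂})}
    (h : ∀ x ∈ s, ∀ y ∈ s, ¬ (glue T₁ v₁ T₂ v₂).Adj x y) :
    ∀ x ∈ {a : V₁ | Sum.inl a ∈ s}, ∀ y ∈ {a : V₁ | Sum.inl a ∈ s}, ¬ T₁.Adj x y :=
  fun x hx y hy hadj => h _ hx _ hy hadj

lemma indep_right {s : Set (V₁ ⊕ {x : V₂ // x ≠ v₂})}
    (h : ∀ x ∈ s, ∀ y ∈ s, ¬ (glue T₁ v₁ T₂ v₂).Adj x y) :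
    ∀ x ∈ {y : V₂ | fmap v₁ v₂ y ∈ s}, ∀ y ∈ {y : V₂ | fmap v₁ v₂ y ∈ s}, ¬ T₂.Adj x y :=
  fun x hx y hy hadj => h _ hx _ hy ((φ T₁ v₁ T₂ v₂).map_adj hadj)

lemma indep_mk {s₁ : Set V₁} {s₂ : Set V₂} (hiff : v₁ ∈ s₁ ↔ v₂ ∈ s₂)
    (h1 : ∀ x ∈ s₁, ∀ y ∈ s₁, ¬ T₁.Adj x y) (h2 : ∀ x ∈ s₂, ∀ y ∈ s₂, ¬ T₂.Adj x y) :
    ∀ x ∈ mkSet (v₂ := v₂) s₁ s₂, ∀ y ∈ mkSet (v₂ := v₂) s₁ s₂,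
      ¬ (glue T₁ v₁ T₂ v₂).Adj x y := by
  rintro (a | a) ha (b | b) hb hadj
  · exact h1 a ha b hb hadj
  · exact h2 v₂ (hiff.mp (hadj.1 ▸ ha)) b.1 hb hadj.2
  · exact h2 a.1 ha v₂ (hiff.mp (hadj.1 ▸ hb)) (T₂.adj_symm hadj.2)
  · exact h2 a.1 ha b.1 hb hadj

lemma mkSet_leftinv (s : Set (V₁ ⊕ {x : V₂ // x ≠ v₂})) :
    mkSet (v₂ := v₂) {a : V₁ | Sum.inl a ∈ s} {y : V₂ | fmap v₁ v₂ y ∈ s} = s := by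
  ext z
  rcases z with a | b
  · exact Iff.rfl
  · show fmap v₁ v₂ b.1 ∈ s ↔ _
    rw [fmap_inr]

lemma mkSet_rightinv₂ {s₁ : Set V₁} {s₂ : Set V₂} (hiff : v₁ ∈ s₁ ↔ v₂ ∈ s₂) :
    {y : V₂ | fmap v₁ v₂ y ∈ mkSet (v₂ := v₂) s₁ s₂} = s₂ := by
  ext y
  exact mem_mkSet_fmap hiff y

end GlueAux

open GlueAux

/-- The product operation on marked trees: identifying the marked vertices
`v₁`, `v₂` of two trees `T₁`, `T₂` into a single vertex `v₃` yields a tree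
`T₃` with `a(T₃,v₃) = a(T₁,v₁)·a(T₂,v₂)` and
`b(T₃,v₃) = b(T₁,v₁)·b(T₂,v₂)`. -/
theorem glue_trees_marked_counts {V₁ V₂ : Type*} [Fintype V₁] [Fintype V₂]
    (T₁ : SimpleGraph V₁) (v₁ : V₁) (T₂ : SimpleGraph V₂) (v₂ : V₂)
    (h₁ : T₁.IsTree) (h₂ : T₂.IsTree) :
    (glue T₁ v₁ T₂ v₂).IsTree ∧
    aCount (glue T₁ v₁ T₂ v₂) (Sum.inl v₁) = aCount T₁ v₁ * aCount T₂ v₂ ∧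
    bCount (glue T₁ v₁ T₂ v₂) (Sum.inl v₁) = bCount T₁ v₁ * bCount T₂ v₂ := by
  classical
  refine ⟨⟨?_, ?_⟩, ?_, ?_⟩
  · -- connected
    have hreach : ∀ z, (glue T₁ v₁ T₂ v₂).Reachable z (Sum.inl v₁) := by
      rintro (a | b)
      · exact SimpleGraph.Reachable.map (ι T₁ v₁ T₂ v₂)
          (h₁.isConnected.preconnected a v₁)
      · have := SimpleGraph.Reachable.map (φ T₁ v₁ T₂ v₂)
          (h₂.isConnected.preconnected b.1 v₂)
        rwa [show (φ T₁ v₁ T₂ v₂) b.1 = Sum.inr b from fmap_inr b,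
          show (φ T₁ v₁ T₂ v₂) v₂ = Sum.inl v₁ from fmap_v₂] at this
    have : Nonempty (V₁ ⊕ {x : V₂ // x ≠ v₂}) := ⟨Sum.inl v₁⟩
    exact SimpleGraph.Connected.mk fun u w => (hreach u).trans (hreach w).symm
  · -- acyclic
    intro u c hc
    rcases Classical.em (∀ z ∈ c.support, z ∈ Set.range (Sum.inl : V₁ → V₁ ⊕ {x : V₂ // x ≠ v₂})) with hA | hA
    · obtain ⟨a, ha⟩ := hA u c.start_mem_support
      obtain ⟨q, hq⟩ := lift₁ c hA a a ha.symm ha.symm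
      have hcyc : q.IsCycle := by
        refine (SimpleGraph.Walk.map_isCycle_iff_of_injective
          (f := ι T₁ v₁ T₂ v₂) Sum.inl_injective).mp ?_
        rw [hq]
        exact (SimpleGraph.Walk.isCycle_copy c ha.symm).mpr hc
      exact h₁.IsAcyclic q hcyc
    rcases Classical.em (∀ z ∈ c.support, z ∈ Set.range (fmap v₁ v₂ : V₂ → V₁ ⊕ {x : V₂ // x ≠ v₂})) with hB | hB
    · obtain ⟨a, ha⟩ := hB u c.start_mem_support
      obtain ⟨q, hq⟩ := lift₂ c hB a a ha.symm ha.symm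
      have hcyc : q.IsCycle := by
        refine (SimpleGraph.Walk.map_isCycle_iff_of_injective
          (f := φ T₁ v₁ T₂ v₂) fmap_injective).mp ?_
        rw [hq]
        exact (SimpleGraph.Walk.isCycle_copy c ha.symm).mpr hc
      exact h₂.IsAcyclic q hcyc
    push_neg at hA hB
    obtain ⟨x, hxs, hx1⟩ := hA
    obtain ⟨y, hys, hy2⟩ := hB
    obtain ⟨a, ha, hav⟩ : ∃ a, y = Sum.inl a ∧ a ≠ v₁ := by
      rcases y with a | b
      · refine ⟨a, rfl, fun h => hy2 ⟨v₂, ?_⟩⟩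
        rw [fmap_v₂, h]
      · exact absurd ⟨b.1, fmap_inr b⟩ hy2
    subst ha
    -- rotate the cycle to start at `Sum.inl a`
    have hc' := hc.rotate hys
    set c' := c.rotate (Sum.inl a) hys with hc'def
    have hxt : x ∈ c.support.tail := by
      cases c with
      | nil => exact absurd rfl hc.ne_nil
      | cons h p =>
        rw [SimpleGraph.Walk.support_cons] at hxs
        rcases List.mem_cons.mp hxs with h' | h'
        · exact h' ▸ p.end_mem_support
        · exact h'
    have hxt' : x ∈ c'.support.tail :=
      ((SimpleGraph.Walk.support_rotate c (Sum.inl a) hys).mem_iff).mpr hxt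
    have hx' : x ∈ c'.support := List.mem_of_mem_tail hxt'
    set p := c'.takeUntil x hx' with hpdef
    set q := c'.dropUntil x hx' with hqdef
    have hp : Sum.inl v₁ ∈ p.support := pass p ⟨a, rfl⟩ hx1
    have hq : Sum.inl v₁ ∈ q.support := by
      have := pass q.reverse ⟨a, rfl⟩ hx1
      rw [SimpleGraph.Walk.support_reverse] at this
      exact List.mem_reverse.mp this
    have hpt : Sum.inl v₁ ∈ p.support.tail := by
      rw [SimpleGraph.Walk.support_eq_cons p] at hp
      rcases List.mem_cons.mp hp with h' | h'
      · exact absurd (Sum.inl_injective h'.symm) hav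
      · exact h'
    have hqt : Sum.inl v₁ ∈ q.support.tail := by
      rw [SimpleGraph.Walk.support_eq_cons q] at hq
      rcases List.mem_cons.mp hq with h' | h'
      · exact absurd ⟨v₁, h'⟩ hx1
      · exact h'
    have hsup : c'.support.tail = p.support.tail ++ q.support.tail := by
      conv_lhs => rw [← SimpleGraph.Walk.take_spec c' hx']
      rw [SimpleGraph.Walk.support_append, SimpleGraph.Walk.support_eq_cons p]
      simp
      rfl
    have hnd := hc'.support_nodup
    rw [hsup] at hnd
    exact (List.nodup_append.mp hnd).2.2 _ hpt _ hqt rfl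
  · -- aCount
    rw [aCount, aCount, aCount, ← Nat.card_prod]
    refine Nat.card_congr ⟨
      fun s => (⟨{a : V₁ | Sum.inl a ∈ s.1}, s.2.1, indep_left s.2.2⟩,
        ⟨{y : V₂ | fmap v₁ v₂ y ∈ s.1},
          by rw [Set.mem_setOf_eq, fmap_v₂]; exact s.2.1, indep_right s.2.2⟩),
      fun p => ⟨mkSet p.1.1 p.2.1, p.1.2.1,
        indep_mk (iff_of_true p.1.2.1 p.2.2.1) p.1.2.2 p.2.2.2⟩,
      fun s => Subtype.ext (mkSet_leftinv s.1),
      fun p => ?_⟩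
    obtain ⟨⟨s₁, h1v, h1⟩, ⟨s₂, h2v, h2⟩⟩ := p
    exact Prod.ext (Subtype.ext rfl)
      (Subtype.ext (mkSet_rightinv₂ (iff_of_true h1v h2v)))
  · -- bCount
    rw [bCount, bCount, bCount, ← Nat.card_prod]
    refine Nat.card_congr ⟨
      fun s => (⟨{a : V₁ | Sum.inl a ∈ s.1}, s.2.1, indep_left s.2.2⟩,
        ⟨{y : V₂ | fmap v₁ v₂ y ∈ s.1},
          fun h => s.2.1 (by rwa [Set.mem_setOf_eq, fmap_v₂] at h),
          indep_right s.2.2⟩),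
      fun p => ⟨mkSet p.1.1 p.2.1, p.1.2.1,
        indep_mk (iff_of_false p.1.2.1 p.2.2.1) p.1.2.2 p.2.2.2⟩,
      fun s => Subtype.ext (mkSet_leftinv s.1),
      fun p => ?_⟩
    obtain ⟨⟨s₁, h1v, h1⟩, ⟨s₂, h2v, h2⟩⟩ := p
    exact Prod.ext (Subtype.ext rfl)
      (Subtype.ext (mkSet_rightinv₂ (iff_of_false h1v h2v)))
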